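/- (i) For all a ∈ [0,1] and b ∈ (0,1), I(b) − I(a) − I′(b)(b − a) − √(2π)·(a − b)²/2 ≥ 0. (ii) The constant √(2π) is largest possible: for every k > √(2π) there exist a ∈ [0,1] and b ∈ (0,1) such that I(b) − I(a) − I′(b)(b − a) − k(a − b)²/2 < 0. -/

import Mathlib

/-- The standard Gaussian distribution function `Φ(x) = (2π)^{-1/2} ∫_{-∞}^x e^{-y²/2} dy`. -/
noncomputable def stdGaussCDF (x : ℝ) : ℝ :=
  ∫ y in Set.Iic x, Real.exp (-y ^ 2 / 2) / Real.sqrt (2 * Real.pi)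

/-- The Gaussian isoperimetric profile `I = φ ∘ Φ⁻¹` on `[0,1]`, with `I(0) = I(1) = 0`. -/
noncomputable def gaussI (p : ℝ) : ℝ :=
  if p = 0 ∨ p = 1 then 0
  else Real.exp (-(Function.invFun stdGaussCDF p) ^ 2 / 2) / Real.sqrt (2 * Real.pi)

open Real Set MeasureTheory Filter Topology

namespace GaussAux

noncomputable def phi (x : ℝ) : ℝ := Real.exp (-x ^ 2 / 2) / Real.sqrt (2 * Real.pi)

lemma sqrt2pi_pos : 0 < Real.sqrt (2 * Real.pi) := Real.sqrt_pos.2 (by positivity)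

lemma phi_pos (x : ℝ) : 0 < phi x := div_pos (Real.exp_pos _) sqrt2pi_pos

lemma phi_cont : Continuous phi := by unfold phi; fun_prop

lemma phi_le (x : ℝ) : phi x ≤ (Real.sqrt (2 * Real.pi))⁻¹ := by
  rw [phi, div_le_iff₀ sqrt2pi_pos, inv_mul_cancel₀ sqrt2pi_pos.ne']
  exact Real.exp_le_one_iff.2 (by nlinarith [sq_nonneg x])

lemma sqrt2pi_le_inv_phi (x : ℝ) : Real.sqrt (2 * Real.pi) ≤ (phi x)⁻¹ := by
  rw [← inv_inv (Real.sqrt (2 * Real.pi))]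
  exact inv_anti₀ (phi_pos x) (phi_le x)

lemma phi_eq : phi = fun x => Real.exp (-(1/2) * x ^ 2) / Real.sqrt (2 * Real.pi) := by
  funext x; rw [phi, show -x^2/2 = -(1/2)*x^2 by ring]

lemma phi_integrable : Integrable phi := by
  rw [phi_eq]
  exact (integrable_exp_neg_mul_sq (by norm_num : (0:ℝ) < 1/2)).div_const _

lemma integral_phi : ∫ x, phi x = 1 := by
  rw [phi_eq, integral_div, integral_gaussian,
    show Real.pi / (1/2) = 2 * Real.pi by ring, div_self sqrt2pi_pos.ne']

lemma stdGaussCDF_eq (x : ℝ) : stdGaussCDF x = ∫ y in Iic x, phi y := rfl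

lemma Φ_sub (a b : ℝ) : stdGaussCDF b - stdGaussCDF a = ∫ y in a..b, phi y := by
  rw [stdGaussCDF_eq, stdGaussCDF_eq]
  exact intervalIntegral.integral_Iic_sub_Iic phi_integrable.integrableOn
    phi_integrable.integrableOn

lemma hasDerivAt_Φ (x : ℝ) : HasDerivAt stdGaussCDF (phi x) x := by
  have h1 : HasDerivAt (fun u => ∫ t in (0:ℝ)..u, phi t) (phi x) x :=
    intervalIntegral.integral_hasDerivAt_right phi_integrable.intervalIntegrable
      phi_cont.stronglyMeasurable.stronglyMeasurableAtFilter phi_cont.continuousAt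
  have h2 : stdGaussCDF = fun u => stdGaussCDF 0 + ∫ t in (0:ℝ)..u, phi t := by
    funext u; rw [← Φ_sub]; ring
  rw [h2]
  exact h1.const_add _

lemma Φ_diff : Differentiable ℝ stdGaussCDF := fun x => (hasDerivAt_Φ x).differentiableAt

lemma Φ_cont : Continuous stdGaussCDF := Φ_diff.continuous

lemma Φ_strictMono : StrictMono stdGaussCDF := by
  intro a b hab
  have : 0 < ∫ y in a..b, phi y :=
    intervalIntegral.intervalIntegral_pos_of_pos phi_integrable.intervalIntegrable
      (fun x => phi_pos x) hab
  rw [← Φ_sub] at this; linarith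

lemma Φ_pos (x : ℝ) : 0 < stdGaussCDF x := by
  rw [stdGaussCDF_eq]
  rw [setIntegral_pos_iff_support_of_nonneg_ae
    (Eventually.of_forall fun y => (phi_pos y).le) phi_integrable.integrableOn]
  have : Function.support phi = univ := by
    ext y; simp [Function.mem_support, (phi_pos y).ne']
  rw [this, univ_inter, Real.volume_Iic]
  exact ENNReal.zero_lt_top

lemma Φ_lt_one (x : ℝ) : stdGaussCDF x < 1 := by
  have hsum : stdGaussCDF x + ∫ y in Ioi x, phi y = 1 := by
    rw [stdGaussCDF_eq, intervalIntegral.integral_Iic_add_Ioi phi_integrable.integrableOn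
      phi_integrable.integrableOn, integral_phi]
  have hpos : 0 < ∫ y in Ioi x, phi y := by
    rw [setIntegral_pos_iff_support_of_nonneg_ae
      (Eventually.of_forall fun y => (phi_pos y).le) phi_integrable.integrableOn]
    have : Function.support phi = univ := by
      ext y; simp [Function.mem_support, (phi_pos y).ne']
    rw [this, univ_inter, Real.volume_Ioi]
    exact ENNReal.zero_lt_top
  linarith

lemma Φ_tendsto_atBot : Tendsto stdGaussCDF atBot (𝓝 0) := by
  have h := intervalIntegral_tendsto_integral_Iic (0:ℝ) (f := phi) (μ := volume)
    phi_integrable.integrableOn tendsto_id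
  have h2 : Tendsto (fun x : ℝ => stdGaussCDF 0 - ∫ t in x..(0:ℝ), phi t) atBot
      (𝓝 (stdGaussCDF 0 - ∫ t in Iic (0:ℝ), phi t)) := tendsto_const_nhds.sub h
  rw [← stdGaussCDF_eq, sub_self] at h2
  refine h2.congr fun x => ?_
  have := Φ_sub x 0; linarith

lemma Φ_tendsto_atTop : Tendsto stdGaussCDF atTop (𝓝 1) := by
  have h := intervalIntegral_tendsto_integral_Ioi (0:ℝ) (f := phi) (μ := volume)
    phi_integrable.integrableOn tendsto_id
  have h2 : Tendsto (fun x : ℝ => stdGaussCDF 0 + ∫ t in (0:ℝ)..x, phi t) atTop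
      (𝓝 (stdGaussCDF 0 + ∫ t in Ioi (0:ℝ), phi t)) := tendsto_const_nhds.add h
  have h3 : stdGaussCDF 0 + ∫ t in Ioi (0:ℝ), phi t = 1 := by
    rw [stdGaussCDF_eq, intervalIntegral.integral_Iic_add_Ioi phi_integrable.integrableOn
      phi_integrable.integrableOn, integral_phi]
  rw [h3] at h2
  refine h2.congr fun x => ?_
  have := Φ_sub 0 x; linarith

lemma Φ_surj {p : ℝ} (hp : p ∈ Ioo (0:ℝ) 1) : ∃ x, stdGaussCDF x = p := by
  obtain ⟨x₀, hx₀⟩ := (Φ_tendsto_atBot.eventually_lt_const hp.1).exists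
  obtain ⟨x₁, hx₁⟩ := (Φ_tendsto_atTop.eventually_const_lt hp.2).exists
  have := intermediate_value_univ x₀ x₁ Φ_cont
  exact this ⟨hx₀.le, hx₁.le⟩

noncomputable def invΦ : ℝ → ℝ := Function.invFun stdGaussCDF

lemma Φ_invΦ {p : ℝ} (hp : p ∈ Ioo (0:ℝ) 1) : stdGaussCDF (invΦ p) = p :=
  Function.invFun_eq (Φ_surj hp)

lemma invΦ_Φ (x : ℝ) : invΦ (stdGaussCDF x) = x :=
  Function.leftInverse_invFun Φ_strictMono.injective x


noncomputable def ΦIso : ℝ ≃o Ioo (0:ℝ) 1 :=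
  StrictMono.orderIsoOfSurjective (fun x => ⟨stdGaussCDF x, Φ_pos x, Φ_lt_one x⟩)
    (fun a b hab => Subtype.mk_lt_mk.2 (Φ_strictMono hab))
    (fun q => by
      obtain ⟨x, hx⟩ := Φ_surj q.2
      exact ⟨x, Subtype.ext hx⟩)

lemma ΦIso_apply (x : ℝ) : (ΦIso x : ℝ) = stdGaussCDF x := rfl

lemma invΦ_eq_symm {p : ℝ} (hp : p ∈ Ioo (0:ℝ) 1) : invΦ p = ΦIso.symm ⟨p, hp⟩ := by
  apply Φ_strictMono.injective
  rw [Φ_invΦ hp, ← ΦIso_apply, OrderIso.apply_symm_apply]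

lemma continuousOn_invΦ : ContinuousOn invΦ (Ioo (0:ℝ) 1) := by
  rw [continuousOn_iff_continuous_restrict]
  have : (Ioo (0:ℝ) 1).domRestrict invΦ = (fun q : Ioo (0:ℝ) 1 => (ΦIso.symm q : ℝ)) := by
    funext q
    simp only [domRestrict_apply]
    rw [invΦ_eq_symm q.2]
  rw [this]
  have hc : Continuous (ΦIso.symm : Ioo (0:ℝ) 1 → ℝ) := OrderIso.continuous ΦIso.symm
  exact hc

lemma continuousAt_invΦ {p : ℝ} (hp : p ∈ Ioo (0:ℝ) 1) : ContinuousAt invΦ p :=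
  continuousOn_invΦ.continuousAt (Ioo_mem_nhds hp.1 hp.2)

lemma hasDerivAt_invΦ {p : ℝ} (hp : p ∈ Ioo (0:ℝ) 1) :
    HasDerivAt invΦ (phi (invΦ p))⁻¹ p := by
  refine HasDerivAt.of_local_left_inverse (continuousAt_invΦ hp) (hasDerivAt_Φ (invΦ p))
    (phi_pos _).ne' ?_
  filter_upwards [Ioo_mem_nhds hp.1 hp.2] with q hq
  exact Φ_invΦ hq

lemma gaussI_eq {p : ℝ} (hp : p ∈ Ioo (0:ℝ) 1) : gaussI p = phi (invΦ p) := by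
  rw [gaussI, if_neg]
  · rfl
  · push_neg
    exact ⟨hp.1.ne', hp.2.ne⟩

lemma gaussI_eventuallyEq {p : ℝ} (hp : p ∈ Ioo (0:ℝ) 1) :
    gaussI =ᶠ[𝓝 p] fun q => phi (invΦ q) := by
  filter_upwards [Ioo_mem_nhds hp.1 hp.2] with q hq
  exact gaussI_eq hq

lemma hasDerivAt_phi (x : ℝ) : HasDerivAt phi (-x * phi x) x := by
  have h1 : HasDerivAt (fun y : ℝ => -y ^ 2 / 2) (-x) x := by
    have := ((hasDerivAt_pow 2 x).neg).div_const 2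
    refine this.congr_deriv ?_
    simp; ring
  have h2 := (h1.exp).div_const (Real.sqrt (2 * Real.pi))
  refine h2.congr_deriv ?_
  rw [phi]; ring

lemma hasDerivAt_gaussI {p : ℝ} (hp : p ∈ Ioo (0:ℝ) 1) :
    HasDerivAt gaussI (-(invΦ p)) p := by
  have h := (hasDerivAt_phi (invΦ p)).comp p (hasDerivAt_invΦ hp)
  have h2 : -(invΦ p) * phi (invΦ p) * (phi (invΦ p))⁻¹ = -(invΦ p) := by
    field_simp
    rw [mul_div_assoc, div_self (phi_pos _).ne', mul_one]
  rw [h2] at h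
  exact h.congr_of_eventuallyEq (gaussI_eventuallyEq hp)

lemma deriv_gaussI {p : ℝ} (hp : p ∈ Ioo (0:ℝ) 1) : deriv gaussI p = -(invΦ p) :=
  (hasDerivAt_gaussI hp).deriv


lemma tendsto_sq_atBot : Tendsto (fun x : ℝ => x ^ 2) atBot atTop := by
  have hn : Tendsto (Neg.neg : ℝ → ℝ) atBot atTop := tendsto_neg_atBot_atTop
  have hp : Tendsto (fun x : ℝ => x ^ 2) atTop atTop := tendsto_pow_atTop two_ne_zero
  have h := hp.comp hn
  refine h.congr fun x => ?_
  simp [Function.comp, neg_pow]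

lemma tendsto_phi_atBot : Tendsto phi atBot (𝓝 0) := by
  have h1 : Tendsto (fun x : ℝ => -x ^ 2 / 2) atBot atBot := by
    have hn : Tendsto (Neg.neg : ℝ → ℝ) atTop atBot := tendsto_neg_atTop_atBot
    have := (hn.comp tendsto_sq_atBot).atBot_div_const (by norm_num : (0:ℝ) < 2)
    exact this.congr fun x => by simp [Function.comp]
  have h2 := (Real.tendsto_exp_atBot.comp h1).div_const (Real.sqrt (2 * Real.pi))
  rw [zero_div] at h2
  exact h2.congr fun x => by rw [phi]; rfl

lemma tendsto_phi_atTop : Tendsto phi atTop (𝓝 0) := by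
  have h1 : Tendsto (fun x : ℝ => -x ^ 2 / 2) atTop atBot := by
    have hn : Tendsto (Neg.neg : ℝ → ℝ) atTop atBot := tendsto_neg_atTop_atBot
    have hp : Tendsto (fun x : ℝ => x ^ 2) atTop atTop := tendsto_pow_atTop two_ne_zero
    have := (hn.comp hp).atBot_div_const (by norm_num : (0:ℝ) < 2)
    exact this.congr fun x => by simp [Function.comp]
  have h2 := (Real.tendsto_exp_atBot.comp h1).div_const (Real.sqrt (2 * Real.pi))
  rw [zero_div] at h2
  exact h2.congr fun x => by rw [phi]; rfl

lemma phi_mono_neg {r x : ℝ} (hr : r ≤ 0) (hx : x ≤ r) : phi x ≤ phi r := by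
  rw [phi, phi, div_le_div_iff_of_pos_right sqrt2pi_pos]
  exact Real.exp_le_exp.2 (by nlinarith)

lemma phi_mono_pos {r x : ℝ} (hr : 0 ≤ r) (hx : r ≤ x) : phi x ≤ phi r := by
  rw [phi, phi, div_le_div_iff_of_pos_right sqrt2pi_pos]
  exact Real.exp_le_exp.2 (by nlinarith)

lemma gaussI_zero : gaussI 0 = 0 := by simp [gaussI]

lemma gaussI_one : gaussI 1 = 0 := by simp [gaussI]

lemma cwa_zero : ContinuousWithinAt gaussI (Icc (0:ℝ) 1) 0 := by
  rw [ContinuousWithinAt, gaussI_zero, Metric.tendsto_nhdsWithin_nhds]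
  intro ε hε
  obtain ⟨r, hrε, hr0⟩ :=
    ((tendsto_phi_atBot.eventually_lt_const hε).and (eventually_le_atBot (0:ℝ))).exists
  refine ⟨stdGaussCDF r, Φ_pos r, fun a ha hd => ?_⟩
  rcases eq_or_lt_of_le ha.1 with h0 | h0
  · simp [← h0, gaussI_zero, hε]
  · have ha1 : a < 1 := by
      have := Φ_lt_one r
      rw [Real.dist_eq, abs_lt] at hd
      linarith [hd.2]
    have haI : a ∈ Ioo (0:ℝ) 1 := ⟨h0, ha1⟩
    rw [gaussI_eq haI, Real.dist_eq, sub_zero, abs_of_pos (phi_pos _)]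
    have hlt : a < stdGaussCDF r := by
      rw [Real.dist_eq, abs_lt] at hd
      linarith [hd.2]
    have hx : invΦ a < r := by
      have := Φ_strictMono.lt_iff_lt (a := invΦ a) (b := r)
      rw [Φ_invΦ haI] at this
      exact this.1 hlt
    exact lt_of_le_of_lt (phi_mono_neg hr0 hx.le) hrε

lemma cwa_one : ContinuousWithinAt gaussI (Icc (0:ℝ) 1) 1 := by
  rw [ContinuousWithinAt, gaussI_one, Metric.tendsto_nhdsWithin_nhds]
  intro ε hε
  obtain ⟨r, hrε, hr0⟩ :=
    ((tendsto_phi_atTop.eventually_lt_const hε).and (eventually_ge_atTop (0:ℝ))).exists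
  refine ⟨1 - stdGaussCDF r, by linarith [Φ_lt_one r], fun a ha hd => ?_⟩
  rcases eq_or_lt_of_le ha.2 with h1 | h1
  · simp [h1, gaussI_one, hε]
  · have ha0 : 0 < a := by
      have := Φ_pos r
      rw [Real.dist_eq, abs_lt] at hd
      linarith [hd.1]
    have haI : a ∈ Ioo (0:ℝ) 1 := ⟨ha0, h1⟩
    rw [gaussI_eq haI, Real.dist_eq, sub_zero, abs_of_pos (phi_pos _)]
    have hlt : stdGaussCDF r < a := by
      rw [Real.dist_eq, abs_lt] at hd
      linarith [hd.1]
    have hx : r < invΦ a := by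
      have := Φ_strictMono.lt_iff_lt (a := r) (b := invΦ a)
      rw [Φ_invΦ haI] at this
      exact this.1 hlt
    exact lt_of_le_of_lt (phi_mono_pos hr0 hx.le) hrε

lemma continuousOn_gaussI : ContinuousOn gaussI (Icc (0:ℝ) 1) := by
  intro p hp
  rcases eq_or_lt_of_le hp.1 with h0 | h0
  · rw [← h0]; exact cwa_zero
  rcases eq_or_lt_of_le hp.2 with h1 | h1
  · rw [h1]; exact cwa_one
  · exact (hasDerivAt_gaussI ⟨h0, h1⟩).continuousAt.continuousWithinAt


/-- `g` is `gaussI` plus the quadratic. -/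
noncomputable def g (q : ℝ) : ℝ := gaussI q + Real.sqrt (2 * Real.pi) * q ^ 2 / 2

noncomputable def g' (q : ℝ) : ℝ := -(invΦ q) + Real.sqrt (2 * Real.pi) * q

lemma hasDerivAt_quad (q : ℝ) :
    HasDerivAt (fun y : ℝ => Real.sqrt (2 * Real.pi) * y ^ 2 / 2)
      (Real.sqrt (2 * Real.pi) * q) q := by
  have := (((hasDerivAt_pow 2 q).const_mul (Real.sqrt (2 * Real.pi))).div_const 2)
  refine this.congr_deriv ?_
  simp; ring

lemma hasDerivAt_g {p : ℝ} (hp : p ∈ Ioo (0:ℝ) 1) : HasDerivAt g (g' p) p :=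
  (hasDerivAt_gaussI hp).add (hasDerivAt_quad p)

lemma hasDerivAt_g' {p : ℝ} (hp : p ∈ Ioo (0:ℝ) 1) :
    HasDerivAt g' (Real.sqrt (2 * Real.pi) - (phi (invΦ p))⁻¹) p := by
  have h := ((hasDerivAt_invΦ hp).neg).add
    ((hasDerivAt_id p).const_mul (Real.sqrt (2 * Real.pi)))
  refine h.congr_deriv ?_
  simp [mul_comm]
  ring

lemma continuousOn_g : ContinuousOn g (Icc (0:ℝ) 1) :=
  continuousOn_gaussI.add (by fun_prop)

lemma antitoneOn_g' : AntitoneOn g' (Ioo (0:ℝ) 1) := by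
  refine antitoneOn_of_deriv_nonpos (convex_Ioo 0 1) ?_ ?_ ?_
  · exact fun p hp => (hasDerivAt_g' hp).continuousAt.continuousWithinAt
  · rw [interior_Ioo]
    exact fun p hp => (hasDerivAt_g' hp).differentiableAt.differentiableWithinAt
  · rw [interior_Ioo]
    intro p hp
    rw [(hasDerivAt_g' hp).deriv]
    have := sqrt2pi_le_inv_phi (invΦ p)
    linarith

lemma tangent {a b : ℝ} (ha : a ∈ Icc (0:ℝ) 1) (hb : b ∈ Ioo (0:ℝ) 1) :
    g a ≤ g b + g' b * (a - b) := by
  rcases lt_trichotomy a b with hab | hab | hab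
  · obtain ⟨ξ, hξ, hslope⟩ := exists_hasDerivAt_eq_slope g g' hab
      (continuousOn_g.mono (Icc_subset_Icc ha.1 hb.2.le))
      (fun x hx => hasDerivAt_g ⟨lt_of_le_of_lt ha.1 hx.1, hx.2.trans hb.2⟩)
    have hξI : ξ ∈ Ioo (0:ℝ) 1 := ⟨lt_of_le_of_lt ha.1 hξ.1, hξ.2.trans hb.2⟩
    have hle : g' b ≤ g' ξ := antitoneOn_g' hξI hb hξ.2.le
    rw [hslope] at hle
    rw [le_div_iff₀ (by linarith : (0:ℝ) < b - a)] at hle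
    nlinarith
  · subst hab; simp
  · obtain ⟨ξ, hξ, hslope⟩ := exists_hasDerivAt_eq_slope g g' hab
      (continuousOn_g.mono (Icc_subset_Icc hb.1.le ha.2))
      (fun x hx => hasDerivAt_g ⟨hb.1.trans hx.1, lt_of_lt_of_le hx.2 ha.2⟩)
    have hξI : ξ ∈ Ioo (0:ℝ) 1 := ⟨hb.1.trans hξ.1, lt_of_lt_of_le hξ.2 ha.2⟩
    have hle : g' ξ ≤ g' b := antitoneOn_g' hb hξI hξ.1.le
    rw [hslope] at hle
    rw [div_le_iff₀ (by linarith : (0:ℝ) < a - b)] at hle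
    nlinarith

lemma part_one {a b : ℝ} (ha : a ∈ Icc (0:ℝ) 1) (hb : b ∈ Ioo (0:ℝ) 1) :
    0 ≤ gaussI b - gaussI a - deriv gaussI b * (b - a)
      - Real.sqrt (2 * Real.pi) * (a - b) ^ 2 / 2 := by
  have key := tangent ha hb
  rw [g, g, g'] at key
  rw [deriv_gaussI hb]
  nlinarith [key]


lemma phi_zero : phi 0 = (Real.sqrt (2 * Real.pi))⁻¹ := by
  rw [phi]; norm_num [Real.exp_zero, one_div]

lemma part_two {k : ℝ} (hk : Real.sqrt (2 * Real.pi) < k) :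
    ∃ a ∈ Set.Icc (0 : ℝ) 1, ∃ b ∈ Set.Ioo (0 : ℝ) 1,
      gaussI b - gaussI a - deriv gaussI b * (b - a) - k * (a - b) ^ 2 / 2 < 0 := by
  set b : ℝ := stdGaussCDF 0 with hbdef
  have hb : b ∈ Ioo (0:ℝ) 1 := ⟨Φ_pos 0, Φ_lt_one 0⟩
  have hinvb : invΦ b = 0 := invΦ_Φ 0
  -- the function h and its derivatives
  set h : ℝ → ℝ := fun a => gaussI b - gaussI a - k * (a - b) ^ 2 / 2 with hdef
  set h' : ℝ → ℝ := fun a => invΦ a - k * (a - b) with h'def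
  have hd : ∀ a ∈ Ioo (0:ℝ) 1, HasDerivAt h (h' a) a := by
    intro a ha
    have h1 : HasDerivAt (fun a => gaussI b - gaussI a) (invΦ a) a := by
      have := (hasDerivAt_const a (gaussI b)).sub (hasDerivAt_gaussI ha)
      refine this.congr_deriv ?_; ring
    have h2 : HasDerivAt (fun a : ℝ => k * (a - b) ^ 2 / 2) (k * (a - b)) a := by
      have := ((((hasDerivAt_id a).sub_const b).pow 2).const_mul k).div_const 2
      refine this.congr_deriv ?_; simp; ring
    exact h1.sub h2
  have hd' : ∀ a ∈ Ioo (0:ℝ) 1, HasDerivAt h' ((phi (invΦ a))⁻¹ - k) a := by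
    intro a ha
    have := (hasDerivAt_invΦ ha).sub (((hasDerivAt_id a).sub_const b).const_mul k)
    refine this.congr_deriv ?_; simp
  -- a neighborhood where the second derivative is negative
  have hcont : ContinuousAt (fun a => (phi (invΦ a))⁻¹ - k) b := by
    have h1 : ContinuousAt (fun a => phi (invΦ a)) b :=
      (phi_cont.continuousAt).comp (continuousAt_invΦ hb)
    exact (h1.inv₀ (phi_pos _).ne').sub continuousAt_const
  have hneg : (fun a => (phi (invΦ a))⁻¹ - k) b < 0 := by
    simp only [hinvb, phi_zero, inv_inv]
    linarith
  have hU : {a | (phi (invΦ a))⁻¹ - k < 0} ∩ Ioo (0:ℝ) 1 ∈ 𝓝 b :=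
    inter_mem (hcont.preimage_mem_nhds (Iio_mem_nhds hneg)) (Ioo_mem_nhds hb.1 hb.2)
  obtain ⟨δ, hδ, hball⟩ := Metric.mem_nhds_iff.1 hU
  set a : ℝ := b + δ / 2 with hadef
  have hsub : Icc b a ⊆ Metric.ball b δ := by
    intro x hx
    rw [Metric.mem_ball, Real.dist_eq, abs_of_nonneg (by linarith [hx.1])]
    have := hx.2
    rw [hadef] at this
    linarith
  have hsub2 : Icc b a ⊆ {x | (phi (invΦ x))⁻¹ - k < 0} ∩ Ioo (0:ℝ) 1 :=
    fun x hx => hball (hsub hx)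
  have hba : b < a := by rw [hadef]; linarith
  -- h' is strictly antitone on [b, a], hence negative on (b, a]
  have hanti' : StrictAntiOn h' (Icc b a) := by
    refine strictAntiOn_of_deriv_neg (convex_Icc b a) ?_ ?_
    · exact fun x hx => (hd' x (hsub2 hx).2).continuousAt.continuousWithinAt
    · intro x hx
      rw [interior_Icc] at hx
      have hx' := hsub2 (Ioo_subset_Icc_self hx)
      rw [(hd' x hx'.2).deriv]
      exact hx'.1
  have h'b : h' b = 0 := by rw [h'def]; simp [hinvb]
  -- hence h is strictly antitone on [b, a]
  have hanti : StrictAntiOn h (Icc b a) := by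
    refine strictAntiOn_of_deriv_neg (convex_Icc b a) ?_ ?_
    · exact fun x hx => (hd x (hsub2 hx).2).continuousAt.continuousWithinAt
    · intro x hx
      rw [interior_Icc] at hx
      have hx' := hsub2 (Ioo_subset_Icc_self hx)
      rw [(hd x hx'.2).deriv]
      have := hanti' (left_mem_Icc.2 hba.le) (Ioo_subset_Icc_self hx) hx.1
      rw [h'b] at this
      exact this
  have hha : h a < 0 := by
    have := hanti (left_mem_Icc.2 hba.le) (right_mem_Icc.2 hba.le) hba
    have hhb : h b = 0 := by rw [hdef]; simp
    linarith
  have haI : a ∈ Ioo (0:ℝ) 1 := (hsub2 (right_mem_Icc.2 hba.le)).2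
  refine ⟨a, ⟨haI.1.le, haI.2.le⟩, b, hb, ?_⟩
  rw [deriv_gaussI hb, hinvb]
  rw [hdef] at hha
  simp only at hha
  linarith

end GaussAux

/-- (i) For all `a ∈ [0,1]` and `b ∈ (0,1)`,
`I(b) − I(a) − I′(b)(b − a) − √(2π)(a − b)²/2 ≥ 0`.
(ii) The constant `√(2π)` is largest possible: for every `k > √(2π)` there are
`a ∈ [0,1]`, `b ∈ (0,1)` making the corresponding expression negative. -/
theorem two_point_inequality_sharp_constant :
    (∀ a ∈ Set.Icc (0 : ℝ) 1, ∀ b ∈ Set.Ioo (0 : ℝ) 1,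
      0 ≤ gaussI b - gaussI a - deriv gaussI b * (b - a)
            - Real.sqrt (2 * Real.pi) * (a - b) ^ 2 / 2) ∧
    (∀ k : ℝ, Real.sqrt (2 * Real.pi) < k →
      ∃ a ∈ Set.Icc (0 : ℝ) 1, ∃ b ∈ Set.Ioo (0 : ℝ) 1,
        gaussI b - gaussI a - deriv gaussI b * (b - a) - k * (a - b) ^ 2 / 2 < 0) :=
  ⟨fun a ha b hb => GaussAux.part_one ha hb, fun _ hk => GaussAux.part_two hk⟩
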